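/- Let X be a normed space with a subspace X_h, and suppose: (i) a discrete inf-sup condition sup_{φ ∈ X_h, φ≠0} ⟨G'(x⁰)w, φ⟩/‖φ‖ ≥ c‖w‖ for all w ∈ X_h with c > 0; (ii) a quadratic residual expansion ⟨G(y), φ⟩ = ⟨G(x⁰), φ⟩ + ⟨G'(x⁰)(y - x⁰), φ⟩ + R(x⁰, y, φ) with |R| ≤ C‖y - x⁰‖²‖φ‖. Let x_h ∈ X_h satisfy ⟨G(x_h), φ⟩ = 0 for all φ ∈ X_h (the Galerkin solution), and let x¹ ∈ X_h be the Newton iterate from initial guess x⁰ ∈ X_h, i.e., ⟨G'(x⁰)(x¹ - x⁰), φ⟩ = -⟨G(x⁰), φ⟩ for all φ ∈ X_h. Then ‖x_h - x¹‖ ≤ (C/c)‖x_h - x⁰‖². -/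

import Mathlib

/-- one Newton step squares the distance to the Galerkin solution. -/
theorem stmt_4 {X : Type*} [NormedAddCommGroup X] [NormedSpace ℝ X]
    (G : X → X →L[ℝ] ℝ) (G' : X → X →L[ℝ] X →L[ℝ] ℝ)
    (R : X → X → X → ℝ) (c C : ℝ) (hc : 0 < c) (hC : 0 < C)
    (Xh : Submodule ℝ X) (x₀ : X) (hx₀ : x₀ ∈ Xh)
    (hinfsup : ∀ w ∈ Xh, ∀ δ > (0 : ℝ), ∃ φ ∈ Xh, φ ≠ 0 ∧
      G' x₀ w φ / ‖φ‖ > c * ‖w‖ - δ)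
    (hTaylor : ∀ y φ : X, G y φ = G x₀ φ + G' x₀ (y - x₀) φ + R x₀ y φ)
    (hR : ∀ y φ : X, |R x₀ y φ| ≤ C * ‖y - x₀‖ ^ 2 * ‖φ‖)
    (xh : X) (hxh : xh ∈ Xh) (hGalerkin : ∀ φ ∈ Xh, G xh φ = 0)
    (x₁ : X) (hx₁ : x₁ ∈ Xh)
    (hNewton : ∀ φ ∈ Xh, G' x₀ (x₁ - x₀) φ = -G x₀ φ) :
    ‖xh - x₁‖ ≤ (C / c) * ‖xh - x₀‖ ^ 2 := by
  set w := xh - x₁ with hw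
  have hwXh : w ∈ Xh := Xh.sub_mem hxh hx₁
  -- key: for φ ∈ Xh, G' x₀ w φ = -R x₀ xh φ
  have key : ∀ φ ∈ Xh, G' x₀ w φ = -R x₀ xh φ := by
    intro φ hφ
    have h1 : w = (xh - x₀) - (x₁ - x₀) := by rw [hw]; abel
    have h2 : G' x₀ w φ = G' x₀ (xh - x₀) φ - G' x₀ (x₁ - x₀) φ := by
      rw [h1, map_sub]; simp
    rw [h2, hNewton φ hφ]
    have h3 := hTaylor xh φ
    rw [hGalerkin φ hφ] at h3
    linarith
  -- so quotient bound
  have bound : ∀ φ ∈ Xh, G' x₀ w φ / ‖φ‖ ≤ C * ‖xh - x₀‖ ^ 2 := by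
    intro φ hφ
    rcases eq_or_ne φ 0 with rfl | hφ0
    · simp; positivity
    · rw [div_le_iff₀ (norm_pos_iff.mpr hφ0)]
      calc G' x₀ w φ ≤ |G' x₀ w φ| := le_abs_self _
        _ = |R x₀ xh φ| := by rw [key φ hφ, abs_neg]
        _ ≤ C * ‖xh - x₀‖ ^ 2 * ‖φ‖ := hR xh φ
  -- conclude c * ‖w‖ ≤ C * ‖xh - x₀‖^2
  have main : c * ‖w‖ ≤ C * ‖xh - x₀‖ ^ 2 := by
    by_contra h
    push_neg at h
    set δ := c * ‖w‖ - C * ‖xh - x₀‖ ^ 2 with hδ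
    have hδpos : 0 < δ := by linarith
    obtain ⟨φ, hφ, hφ0, hgt⟩ := hinfsup w hwXh δ hδpos
    have := bound φ hφ
    have : c * ‖w‖ - δ < C * ‖xh - x₀‖ ^ 2 := lt_of_lt_of_le hgt this
    simp [hδ] at this
  rw [div_mul_eq_mul_div, le_div_iff₀ hc, mul_comm]
  linarith
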